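/- Let n and d be positive integers with d(d+1)+1 < n, and let t₁, …, t_d be integers with Σ tᵢ = n−1 and each tᵢ ≥ d+1. Let G′_t be the graph obtained from the disjoint union of complete graphs H₁, …, H_d of orders t₁, …, t_d by adding a new vertex u joined to all other vertices. Then every 2-proper partition of G′_t has at least d parts, and α*(G′_t) ≤ d. -/

import Mathlib

/-- Vertex type of the graph `G′_t`: a new vertex `u` (`none`) together with the
disjoint union of the vertex sets of complete graphs `H₁, …, H_d` of orders
`t 0, …, t (d−1)`. -/
abbrev GtV (d : ℕ) (t : Fin d → ℕ) := Option (Σ i : Fin d, Fin (t i))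

/-- Underlying edge relation of `G′_t`: each `Hᵢ` is complete (via `fromRel`), and
the vertex `u = none` is joined to all other vertices. -/
def gtRel' (d : ℕ) (t : Fin d → ℕ) : GtV d t → GtV d t → Bool
  | none, some _ => true
  | some ⟨i, _⟩, some ⟨i', _⟩ => i == i'
  | _, _ => false

/-- The graph `G′_t`. -/
def Gt' (d : ℕ) (t : Fin d → ℕ) : SimpleGraph (GtV d t) :=
  SimpleGraph.fromRel (fun x y => gtRel' d t x y = true)

instance {d : ℕ} {t : Fin d → ℕ} : DecidableRel (Gt' d t).Adj :=
  fun x y => decidable_of_iff _ (SimpleGraph.fromRel_adj _ x y).symm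

/-- A finite graph is 2-connected if it has more than 2 vertices and deleting any
set of fewer than 2 vertices leaves a connected graph. -/
def TwoConnected {W : Type*} [Fintype W] [DecidableEq W] (G : SimpleGraph W) : Prop :=
  2 < Fintype.card W ∧ G.Connected ∧ ∀ v : W, (G.induce {u : W | u ≠ v}).Connected

/-- `P` is a 2-proper partition of `G`. -/
def Is2ProperPartition {W : Type*} [Fintype W] [DecidableEq W] (G : SimpleGraph W)
    (P : Finset (Finset W)) : Prop :=
  (∀ p ∈ P, ∀ q ∈ P, p ≠ q → Disjoint p q) ∧
  P.sup id = Finset.univ ∧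
  ∀ p ∈ P, TwoConnected (G.induce (↑p : Set W))

/-- `I` is an independent set of `G`. -/
def IsIndep {V : Type*} (G : SimpleGraph V) (I : Finset V) : Prop :=
  ∀ u ∈ I, ∀ v ∈ I, u ≠ v → ¬ G.Adj u v

/-- `I` is a light independent set: its degree sum is at most `n − 1`. -/
def IsLight {V : Type*} [Fintype V] (G : SimpleGraph V) [DecidableRel G.Adj]
    (I : Finset V) : Prop :=
  ∑ u ∈ I, G.degree u ≤ Fintype.card V - 1


lemma adj_idx {d : ℕ} {t : Fin d → ℕ} {i j : Fin d} {a : Fin (t i)} {b : Fin (t j)}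
    (h : (Gt' d t).Adj (some ⟨i,a⟩) (some ⟨j,b⟩)) : i = j := by
  simp only [Gt', SimpleGraph.fromRel_adj, gtRel', beq_iff_eq] at h
  tauto

lemma adj_none {d : ℕ} {t : Fin d → ℕ} {x : Σ i : Fin d, Fin (t i)} :
    (Gt' d t).Adj none (some x) := by
  simp [Gt', SimpleGraph.fromRel_adj, gtRel']

lemma adj_same {d : ℕ} {t : Fin d → ℕ} {i : Fin d} {a b : Fin (t i)} (hab : a ≠ b) :
    (Gt' d t).Adj (some ⟨i,a⟩) (some ⟨i,b⟩) := by
  simp only [Gt', SimpleGraph.fromRel_adj, gtRel', beq_self_eq_true]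
  exact ⟨by simpa using hab, Or.inl trivial⟩

lemma reach_const {V β : Type*} {G : SimpleGraph V} (f : V → β)
    (h : ∀ a b, G.Adj a b → f a = f b) {a b : V} (hr : G.Reachable a b) : f a = f b := by
  obtain ⟨w⟩ := hr
  induction w with
  | nil => rfl
  | cons h' _ ih => exact (h _ _ h').trans ih

/-- index function on vertices, with junk value `i0` for `none`. -/
def idxOf {d : ℕ} {t : Fin d → ℕ} (i0 : Fin d) : GtV d t → Fin d
  | none => i0
  | some ⟨k, _⟩ => k

lemma key {d : ℕ} {t : Fin d → ℕ} {p : Finset (GtV d t)}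
    (h2 : TwoConnected ((Gt' d t).induce (↑p : Set (GtV d t))))
    {i j : Fin d} {a : Fin (t i)} {b : Fin (t j)}
    (ha : some ⟨i,a⟩ ∈ p) (hb : some ⟨j,b⟩ ∈ p) : i = j := by
  by_cases hu : (none : GtV d t) ∈ p
  · -- delete u; invariant on remaining graph
    have hc := h2.2.2 ⟨none, hu⟩
    set v : (↑p : Set (GtV d t)) := ⟨none, hu⟩
    have hx : (⟨some ⟨i,a⟩, ha⟩ : (↑p : Set (GtV d t))) ∈ {u : (↑p : Set (GtV d t)) | u ≠ v} := by
      simp [v]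
    have hy : (⟨some ⟨j,b⟩, hb⟩ : (↑p : Set (GtV d t))) ∈ {u : (↑p : Set (GtV d t)) | u ≠ v} := by
      simp [v]
    have hr := hc.preconnected ⟨_, hx⟩ ⟨_, hy⟩
    have := reach_const (G := ((Gt' d t).induce (↑p : Set (GtV d t))).induce
        {u : (↑p : Set (GtV d t)) | u ≠ v}) (fun x => idxOf i x.1.1) ?_ hr
    · exact this
    · rintro ⟨⟨x, hxp⟩, hxv⟩ ⟨⟨y, hyp⟩, hyv⟩ hadj
      have hadj' : (Gt' d t).Adj x y := hadj
      match x, y with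
      | none, _ => exact absurd (Subtype.ext rfl) hxv
      | some _, none => exact absurd (Subtype.ext rfl) hyv
      | some ⟨k, c⟩, some ⟨k', c'⟩ => exact adj_idx hadj'
  · have hr := h2.2.1.preconnected (⟨some ⟨i,a⟩, ha⟩ : (↑p : Set (GtV d t))) ⟨some ⟨j,b⟩, hb⟩
    have := reach_const (G := (Gt' d t).induce (↑p : Set (GtV d t)))
        (fun x => idxOf i x.1) ?_ hr
    · exact this
    · rintro ⟨x, hxp⟩ ⟨y, hyp⟩ hadj
      have hadj' : (Gt' d t).Adj x y := hadj
      match x, y with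
      | none, _ => exact absurd hxp hu
      | some _, none => exact absurd hyp hu
      | some ⟨k, c⟩, some ⟨k', c'⟩ => exact adj_idx hadj'

/-- Let `n, d` be positive integers with `d(d+1)+1 < n` and let
`t₁, …, t_d` be integers with `Σ tᵢ = n − 1` and each `tᵢ ≥ d + 1`. Then every
2-proper partition of `G′_t` has at least `d` parts, and `α*(G′_t) ≤ d` (every
light independent set has at most `d` vertices). -/
theorem stmt13 (n d : ℕ) (t : Fin d → ℕ) (hd : 0 < d) (hn : d * (d + 1) + 1 < n)
    (hsum : ∑ i, t i = n - 1) (ht : ∀ i, d + 1 ≤ t i) :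
    (∀ P : Finset (Finset (GtV d t)), Is2ProperPartition (Gt' d t) P → d ≤ P.card) ∧
    (∀ I : Finset (GtV d t), IsIndep (Gt' d t) I → IsLight (Gt' d t) I →
      I.card ≤ d) := by

  constructor
  · intro P hP
    obtain ⟨hdisj, hcov, h2c⟩ := hP
    have hpos : ∀ i : Fin d, 0 < t i := fun i => lt_of_lt_of_le (Nat.succ_pos d) (ht i)
    have hmem : ∀ i : Fin d, ∃ p ∈ P, (some ⟨i, ⟨0, hpos i⟩⟩ : GtV d t) ∈ p := by
      intro i
      have : (some ⟨i, ⟨0, hpos i⟩⟩ : GtV d t) ∈ P.sup id := by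
        rw [hcov]; exact Finset.mem_univ _
      simpa using Finset.mem_sup.mp this
    choose g hg hgmem using hmem
    have : (Finset.univ : Finset (Fin d)).card ≤ P.card := by
      apply Finset.card_le_card_of_injOn g (fun i _ => hg i)
      intro i _ j _ hij
      exact key (h2c (g i) (hg i)) (hgmem i) (hij ▸ hgmem j)
    simpa using this
  · intro I hI _
    by_cases hu : (none : GtV d t) ∈ I
    · have : I = {none} := by
        apply Finset.eq_singleton_iff_unique_mem.mpr
        refine ⟨hu, fun x hx => ?_⟩
        by_contra hxn
        match x, hxn with
        | some s, _ => exact hI none hu (some s) hx (by simp) adj_none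
      rw [this]; simpa using Nat.succ_le_of_lt hd
    · have : I.card ≤ (Finset.univ : Finset (Fin d)).card := by
        apply Finset.card_le_card_of_injOn (idxOf ⟨0, hd⟩) (fun x _ => Finset.mem_univ _)
        intro x hx y hy hxy
        match x, y with
        | none, _ => exact absurd hx hu
        | some _, none => exact absurd hy hu
        | some ⟨k, c⟩, some ⟨k', c'⟩ =>
          simp only [idxOf] at hxy
          subst hxy
          by_contra hne
          have hcc : c ≠ c' := fun h => hne (by rw [h])
          exact hI _ hx _ hy hne (adj_same hcc)
      simpa using this
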